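/- Let M = K(a,b,c,d) be a 4×4 K3 Markov matrix whose eigenvalues 1, x = a+b−c−d, y = a−b+c−d, z = a−b−c+d are pairwise distinct. Then the following are equivalent: (i) M is embeddable, i.e. there exists a rate matrix Q with exp(Q) = M; (ii) M is K3-embeddable, i.e. there exists a rate matrix Q with K3 form and exp(Q) = M; (iii) x > 0, y > 0, z > 0, and x ≥ y·z, y ≥ x·z, z ≥ x·y. -/

import Mathlib

/-- The Kimura 3ST matrix `K(a,b,c,d)`. -/
def K {α : Type*} (a b c d : α) : Matrix (Fin 4) (Fin 4) α :=
  !![a, b, c, d;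
     b, a, d, c;
     c, d, a, b;
     d, c, b, a]

/-- A Markov matrix: nonnegative entries, rows sum to 1. -/
def IsMarkov {k : ℕ} (M : Matrix (Fin k) (Fin k) ℝ) : Prop :=
  (∀ i j, 0 ≤ M i j) ∧ ∀ i, ∑ j, M i j = 1

/-- A rate matrix: nonnegative off-diagonal entries, rows sum to 0. -/
def IsRate {k : ℕ} (Q : Matrix (Fin k) (Fin k) ℝ) : Prop :=
  (∀ i j, i ≠ j → 0 ≤ Q i j) ∧ ∀ i, ∑ j, Q i j = 0

open Matrix

noncomputable def Hm : Matrix (Fin 4) (Fin 4) ℝ :=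
  !![1,1,1,1; 1,1,-1,-1; 1,-1,1,-1; 1,-1,-1,1]

lemma Hm_mul_Hm : Hm * Hm = (4:ℝ) • (1 : Matrix (Fin 4) (Fin 4) ℝ) := by
  ext i j
  fin_cases i <;> fin_cases j <;>
    simp [Hm, Matrix.mul_apply, Fin.sum_univ_four, Matrix.one_apply, Matrix.vecHead, Matrix.vecTail] <;> norm_num

noncomputable def Tm (X : Matrix (Fin 4) (Fin 4) ℝ) : Matrix (Fin 4) (Fin 4) ℝ :=
  (1/4 : ℝ) • (Hm * X * Hm)

lemma Tm_Tm (X : Matrix (Fin 4) (Fin 4) ℝ) : Tm (Tm X) = X := by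
  unfold Tm
  rw [Matrix.mul_smul, Matrix.smul_mul, smul_smul]
  have h : Hm * (Hm * X * Hm) * Hm = (Hm * Hm) * X * (Hm * Hm) := by
    simp only [Matrix.mul_assoc]
  rw [h, Hm_mul_Hm]
  simp [Matrix.smul_mul, Matrix.mul_smul, smul_smul]
  norm_num

lemma Tm_mul (X Y : Matrix (Fin 4) (Fin 4) ℝ) : Tm X * Tm Y = Tm (X * Y) := by
  unfold Tm
  rw [Matrix.smul_mul, Matrix.mul_smul, smul_smul]
  have h : Hm * X * Hm * (Hm * Y * Hm) = Hm * (X * ((Hm * Hm) * Y)) * Hm := by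
    simp only [Matrix.mul_assoc]
  rw [h, Hm_mul_Hm]
  simp [Matrix.smul_mul, Matrix.mul_smul, smul_smul, Matrix.mul_assoc]

lemma diag4 (s p q r : ℝ) :
    Matrix.diagonal ![s, p, q, r] = !![s,0,0,0; 0,p,0,0; 0,0,q,0; 0,0,0,r] := by
  ext i j
  fin_cases i <;> fin_cases j <;>
    simp [Matrix.diagonal, Matrix.vecHead, Matrix.vecTail]

set_option maxHeartbeats 1000000 in
lemma Tm_diag (s p q r : ℝ) :
    Tm (Matrix.diagonal ![s, p, q, r]) =
      K ((s+p+q+r)/4) ((s+p-q-r)/4) ((s-p+q-r)/4) ((s-p-q+r)/4) := by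
  rw [diag4]
  ext i j
  fin_cases i <;> fin_cases j <;>
    simp [Tm, Hm, K, Matrix.mul_apply, Fin.sum_univ_four,
      Matrix.vecHead, Matrix.vecTail] <;> ring

lemma Hm_right_inv : Hm * ((1/4 : ℝ) • Hm) = 1 := by
  rw [Matrix.mul_smul, Hm_mul_Hm, smul_smul]; norm_num

lemma Hm_inv : Hm⁻¹ = (1/4 : ℝ) • Hm := Matrix.inv_eq_right_inv Hm_right_inv

lemma Hm_isUnit : IsUnit Hm :=
  ⟨⟨Hm, (1/4:ℝ) • Hm, Hm_right_inv, mul_eq_one_comm.mp Hm_right_inv⟩, rfl⟩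

lemma Tm_eq_conj (X : Matrix (Fin 4) (Fin 4) ℝ) : Tm X = Hm * X * Hm⁻¹ := by
  rw [Hm_inv, Matrix.mul_smul]; rfl

lemma exp_Tm_diag (v : Fin 4 → ℝ) :
    NormedSpace.exp (Tm (Matrix.diagonal v)) =
      Tm (Matrix.diagonal fun i => Real.exp (v i)) := by
  have h := Matrix.exp_conj Hm (Matrix.diagonal v) Hm_isUnit
  rw [Tm_eq_conj, Tm_eq_conj, h, Matrix.exp_diagonal]
  congr 2
  rw [Pi.exp_def]
  funext i
  rw [Real.exp_eq_exp_ℝ]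

lemma K_as_Tm (a b c d x y z : ℝ)
    (hx : x = a + b - c - d) (hy : y = a - b + c - d) (hz : z = a - b - c + d)
    (hsum : a + b + c + d = 1) :
    K a b c d = Tm (Matrix.diagonal ![1, x, y, z]) := by
  rw [Tm_diag, show (1+x+y+z)/4 = a by linarith, show (1+x-y-z)/4 = b by linarith,
    show (1-x+y-z)/4 = c by linarith, show (1-x-y+z)/4 = d by linarith]

lemma main_forward (a b c d x y z : ℝ)
    (hx : x = a + b - c - d) (hy : y = a - b + c - d) (hz : z = a - b - c + d)
    (hsum : a + b + c + d = 1)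
    (hv : ∀ i j : Fin 4, i ≠ j → (![1, x, y, z] : Fin 4 → ℝ) i ≠ ![1, x, y, z] j)
    (Q : Matrix (Fin 4) (Fin 4) ℝ) (hQ : IsRate Q)
    (hexp : NormedSpace.exp Q = K a b c d) :
    (∃ α β γ δ : ℝ, Q = K α β γ δ) ∧
      (0 < x ∧ 0 < y ∧ 0 < z ∧ y * z ≤ x ∧ x * z ≤ y ∧ x * y ≤ z) := by
  have hKT : K a b c d = Tm (Matrix.diagonal ![1, x, y, z]) :=
    K_as_Tm a b c d x y z hx hy hz hsum
  have hcomm : Q * K a b c d = K a b c d * Q := by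
    have h := (Commute.refl Q).exp_right
    rw [hexp] at h
    exact h.eq
  set D := Tm Q with hD
  have hQD : Q = Tm D := (Tm_Tm Q).symm
  have hL : Matrix.diagonal ![1, x, y, z] = Tm (K a b c d) := by rw [hKT, Tm_Tm]
  have hDL : D * Matrix.diagonal ![1, x, y, z] = Matrix.diagonal ![1, x, y, z] * D := by
    rw [hL, hD, Tm_mul, Tm_mul, hcomm]
  have hoff : ∀ i j : Fin 4, i ≠ j → D i j = 0 := by
    intro i j hij
    have h1 := congrFun (congrFun hDL i) j
    rw [Matrix.mul_diagonal, Matrix.diagonal_mul] at h1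
    have h2 : D i j * (![1,x,y,z] j - ![1,x,y,z] i) = 0 := by linear_combination h1
    rcases mul_eq_zero.mp h2 with h | h
    · exact h
    · exact absurd (sub_eq_zero.mp h) (hv j i (Ne.symm hij))
  have hDdiag : D = Matrix.diagonal ![D 0 0, D 1 1, D 2 2, D 3 3] := by
    ext i j
    rcases eq_or_ne i j with rfl | h
    · rw [Matrix.diagonal_apply_eq]
      fin_cases i <;> simp
    · rw [Matrix.diagonal_apply_ne _ h, hoff i j h]
  set s := D 0 0; set p := D 1 1; set q := D 2 2; set r := D 3 3
  have hQK : Q = K ((s+p+q+r)/4) ((s+p-q-r)/4) ((s-p+q-r)/4) ((s-p-q+r)/4) := by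
    rw [hQD, hDdiag, Tm_diag]
  refine ⟨⟨_, _, _, _, hQK⟩, ?_⟩
  -- exp side
  have hexp2 : Tm (Matrix.diagonal ![Real.exp s, Real.exp p, Real.exp q, Real.exp r]) =
      Tm (Matrix.diagonal ![1, x, y, z]) := by
    rw [← hKT, ← hexp, hQD, hDdiag, exp_Tm_diag]
    have hfun : (fun i => Real.exp ((![D 0 0, D 1 1, D 2 2, D 3 3] : Fin 4 → ℝ) i))
        = ![Real.exp (D 0 0), Real.exp (D 1 1), Real.exp (D 2 2), Real.exp (D 3 3)] := by
      funext i
      fin_cases i <;> simp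
    rw [hfun]
  have hdiag_eq : (Matrix.diagonal ![Real.exp s, Real.exp p, Real.exp q, Real.exp r]
      : Matrix (Fin 4) (Fin 4) ℝ) = Matrix.diagonal ![1, x, y, z] := by
    have := congrArg Tm hexp2
    rwa [Tm_Tm, Tm_Tm] at this
  have he : ∀ i : Fin 4, (![Real.exp s, Real.exp p, Real.exp q, Real.exp r] : Fin 4 → ℝ) i
      = ![1, x, y, z] i := by
    intro i
    have := congrFun (congrFun hdiag_eq i) i
    rwa [Matrix.diagonal_apply_eq, Matrix.diagonal_apply_eq] at this
  have hes : Real.exp s = 1 := by simpa using he 0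
  have hep : Real.exp p = x := by simpa using he 1
  have heq : Real.exp q = y := by simpa using he 2
  have her : Real.exp r = z := by simpa using he 3
  have hs0 : s = 0 := by
    have hrow := hQ.2 0
    rw [hQK] at hrow
    simp [K, Fin.sum_univ_four] at hrow
    linarith
  have hb : 0 ≤ (s+p-q-r)/4 := by
    have h := hQ.1 0 1 (by decide)
    rw [hQK] at h
    simpa [K] using h
  have hc : 0 ≤ (s-p+q-r)/4 := by
    have h := hQ.1 0 2 (by decide)
    rw [hQK] at h
    simpa [K] using h
  have hd : 0 ≤ (s-p-q+r)/4 := by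
    have h := hQ.1 0 3 (by decide)
    rw [hQK] at h
    simpa [K] using h
  have hx0 : 0 < x := hep ▸ Real.exp_pos p
  have hy0 : 0 < y := heq ▸ Real.exp_pos q
  have hz0 : 0 < z := her ▸ Real.exp_pos r
  refine ⟨hx0, hy0, hz0, ?_, ?_, ?_⟩
  · calc y * z = Real.exp (q + r) := by rw [Real.exp_add, heq, her]
      _ ≤ Real.exp p := Real.exp_le_exp.mpr (by linarith)
      _ = x := hep
  · calc x * z = Real.exp (p + r) := by rw [Real.exp_add, hep, her]
      _ ≤ Real.exp q := Real.exp_le_exp.mpr (by linarith)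
      _ = y := heq
  · calc x * y = Real.exp (p + q) := by rw [Real.exp_add, hep, heq]
      _ ≤ Real.exp r := Real.exp_le_exp.mpr (by linarith)
      _ = z := her

lemma main_reverse (a b c d x y z : ℝ)
    (hx : x = a + b - c - d) (hy : y = a - b + c - d) (hz : z = a - b - c + d)
    (hsum : a + b + c + d = 1)
    (hx0 : 0 < x) (hy0 : 0 < y) (hz0 : 0 < z)
    (h1 : y * z ≤ x) (h2 : x * z ≤ y) (h3 : x * y ≤ z) :
    ∃ Q : Matrix (Fin 4) (Fin 4) ℝ, IsRate Q ∧ (∃ α β γ δ : ℝ, Q = K α β γ δ) ∧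
      NormedSpace.exp Q = K a b c d := by
  set p := Real.log x
  set q := Real.log y
  set r := Real.log z
  have hpqr : q + r ≤ p := by
    have := Real.log_le_log (by positivity) h1
    rwa [Real.log_mul hy0.ne' hz0.ne'] at this
  have hprq : p + r ≤ q := by
    have := Real.log_le_log (by positivity) h2
    rwa [Real.log_mul hx0.ne' hz0.ne'] at this
  have hpqr' : p + q ≤ r := by
    have := Real.log_le_log (by positivity) h3
    rwa [Real.log_mul hx0.ne' hy0.ne'] at this
  refine ⟨Tm (Matrix.diagonal ![0, p, q, r]), ?_, ?_, ?_⟩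
  · constructor
    · intro i j hij
      rw [Tm_diag]
      fin_cases i <;> fin_cases j <;> simp_all [K] <;> linarith
    · intro i
      rw [Tm_diag]
      fin_cases i <;> simp [K, Fin.sum_univ_four] <;> ring
  · exact ⟨_, _, _, _, Tm_diag 0 p q r⟩
  · rw [exp_Tm_diag]
    have hfun : (fun i => Real.exp ((![0, p, q, r] : Fin 4 → ℝ) i)) = ![1, x, y, z] := by
      funext i
      fin_cases i <;>
        simp [p, q, r, Real.exp_log hx0, Real.exp_log hy0, Real.exp_log hz0]
    rw [hfun, ← K_as_Tm a b c d x y z hx hy hz hsum]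


/-- For a K3 Markov matrix `M = K(a,b,c,d)` with pairwise distinct eigenvalues
`1, x, y, z`, embeddability, K3-embeddability, and the eigenvalue inequalities
`x, y, z > 0`, `x ≥ yz`, `y ≥ xz`, `z ≥ xy` are all equivalent. -/
theorem stmt_9 (a b c d x y z : ℝ)
    (hx : x = a + b - c - d) (hy : y = a - b + c - d) (hz : z = a - b - c + d)
    (hM : IsMarkov (K a b c d))
    (h1x : (1 : ℝ) ≠ x) (h1y : (1 : ℝ) ≠ y) (h1z : (1 : ℝ) ≠ z)
    (hxy : x ≠ y) (hxz : x ≠ z) (hyz : y ≠ z) :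
    ((∃ Q : Matrix (Fin 4) (Fin 4) ℝ, IsRate Q ∧ NormedSpace.exp Q = K a b c d) ↔
      (∃ Q : Matrix (Fin 4) (Fin 4) ℝ, IsRate Q ∧ (∃ α β γ δ : ℝ, Q = K α β γ δ) ∧
        NormedSpace.exp Q = K a b c d)) ∧
    ((∃ Q : Matrix (Fin 4) (Fin 4) ℝ, IsRate Q ∧ NormedSpace.exp Q = K a b c d) ↔
      (0 < x ∧ 0 < y ∧ 0 < z ∧ y * z ≤ x ∧ x * z ≤ y ∧ x * y ≤ z)) := by
  have hsum : a + b + c + d = 1 := by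
    have h := hM.2 0
    simpa [K, Fin.sum_univ_four] using h
  have h1x' := h1x.symm
  have h1y' := h1y.symm
  have h1z' := h1z.symm
  have hxy' := hxy.symm
  have hxz' := hxz.symm
  have hyz' := hyz.symm
  have hv : ∀ i j : Fin 4, i ≠ j → (![1, x, y, z] : Fin 4 → ℝ) i ≠ ![1, x, y, z] j := by
    intro i j hij
    fin_cases i <;> fin_cases j <;> simp_all
  constructor
  · constructor
    · rintro ⟨Q, hQ, hexp⟩
      exact ⟨Q, hQ, (main_forward a b c d x y z hx hy hz hsum hv Q hQ hexp).1, hexp⟩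
    · rintro ⟨Q, hQ, _, hexp⟩
      exact ⟨Q, hQ, hexp⟩
  · constructor
    · rintro ⟨Q, hQ, hexp⟩
      exact (main_forward a b c d x y z hx hy hz hsum hv Q hQ hexp).2
    · rintro ⟨hx0, hy0, hz0, h1, h2, h3⟩
      obtain ⟨Q, hQ, _, hexp⟩ := main_reverse a b c d x y z hx hy hz hsum hx0 hy0 hz0 h1 h2 h3
      exact ⟨Q, hQ, hexp⟩
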